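/- Norm bound for λ_∅-vectors: ‖λ_∅(x_1,...,x_n)ξ_ω‖² ≤ (Σ_{p=0}^n p! C(n,p)²) Π_{i=1}^n |||x_i|||² ≤ C n^{2n} Π_{i=1}^n |||x_i|||² for an absolute constant C > 0, using p! C(n,p)² ≤ n^{2p}/p! and Σ_{p=0}^n n^{2p}/p! ≤ e · n^{2n} for n ≥ 1. -/

import Mathlib

variable {N : Type*} [NormedRing N] [StarRing N] [NormedAlgebra ℂ N]

/-- The norm `|||x||| := max{‖x‖, ω(x*x)^{1/2}, ω(xx*)^{1/2}, |ω(x)|}`. -/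
noncomputable def tripleNorm (ω : N →ₗ[ℂ] ℂ) (x : N) : ℝ :=
  max (max ‖x‖ (Real.sqrt (ω (star x * x)).re))
    (max (Real.sqrt (ω (x * star x)).re) ‖ω x‖)

/-- The combinatorial squared norm of a `λ_∅`-vector (its inner product with itself),
given by the pairing formula. -/
noncomputable def lamEmptyIP (ω : N →ₗ[ℂ] ℂ) {ι κ : Type*}
    [Fintype ι] [Fintype κ] [DecidableEq ι] [DecidableEq κ]
    (x : ι → N) (y : κ → N) : ℂ :=
  ∑ s : Finset ι, ∑ t : Finset κ,
    if s.card = t.card then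
      (∑ e : {i // i ∈ s} ≃ {j // j ∈ t}, ∏ i : {i // i ∈ s}, ω (star (x i.1) * y (e i).1))
        * (∏ i ∈ sᶜ, ω (star (x i))) * (∏ j ∈ tᶜ, ω (y j))
    else 0

lemma omega_cauchy_schwarz (ω : N →ₗ[ℂ] ℂ)
    (hpos : ∀ a : N, 0 ≤ (ω (star a * a)).re ∧ (ω (star a * a)).im = 0)
    (hstar : ∀ a : N, ω (star a) = starRingEnd ℂ (ω a)) (a b : N) :
    ‖ω (star a * b)‖
      ≤ Real.sqrt (ω (star a * a)).re * Real.sqrt (ω (star b * b)).re := by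
  set c : ℂ := ω (star a * b) with hc
  set A : ℝ := (ω (star a * a)).re with hA
  set B : ℝ := (ω (star b * b)).re with hB
  have hA0 : 0 ≤ A := (hpos a).1
  have hB0 : 0 ≤ B := (hpos b).1
  have hBim : (ω (star b * b)).im = 0 := (hpos b).2
  have hgen : ∀ u v : N, ω (star u * v) = starRingEnd ℂ (ω (star v * u)) := by
    intro u v
    rw [show star u * v = star (star v * u) by simp [star_mul], hstar]
  have hbb : ω (star b * b) = (B : ℂ) := Complex.ext (by simp [hB]) (by simp [hBim])
  have key : ∀ t : ℂ, 0 ≤ A - 2 * (t * c).re + Complex.normSq t * B := by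
    intro t
    set w : N := t • b with hw
    have h0 := (hpos (a - w)).1
    have hw1 : ω (star a * w) = t * c := by
      rw [hw, mul_smul_comm, map_smul, smul_eq_mul]
    have hw2 : ω (star w * a) = starRingEnd ℂ (t * c) := by rw [hgen, hw1]
    have hw3 : ω (star w * w) = (Complex.normSq t : ℂ) * (B : ℂ) := by
      rw [hw, mul_smul_comm, map_smul, smul_eq_mul, hgen, mul_smul_comm, map_smul,
        smul_eq_mul, hbb]
      rw [map_mul, Complex.conj_ofReal, Complex.normSq_eq_conj_mul_self]
      ring
    have hexp : star (a - w) * (a - w)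
        = star a * a - star a * w - star w * a + star w * w := by
      rw [star_sub, sub_mul, mul_sub, mul_sub]; abel
    rw [hexp] at h0
    simp only [map_add, map_sub, hw1, hw2, hw3, Complex.add_re, Complex.sub_re,
      Complex.conj_re] at h0
    have : ((Complex.normSq t : ℂ) * (B : ℂ)).re = Complex.normSq t * B := by
      rw [← Complex.ofReal_mul, Complex.ofReal_re]
    rw [this] at h0
    linarith [h0]
  rcases eq_or_lt_of_le hB0 with hBz | hBpos
  · -- B = 0 : show c = 0
    have hc0 : c = 0 := by
      by_contra hne
      have hns : 0 < Complex.normSq c := Complex.normSq_pos.2 hne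
      set r : ℝ := A / (2 * Complex.normSq c) + 1 with hr
      have hk := key ((r : ℂ) * starRingEnd ℂ c)
      have htc : (((r : ℂ) * starRingEnd ℂ c) * c).re = r * Complex.normSq c := by
        rw [mul_assoc, Complex.conj_mul']
        simp [← Complex.ofReal_pow, ← Complex.ofReal_mul, Complex.normSq_eq_norm_sq]
      rw [htc, ← hBz] at hk
      have : r * Complex.normSq c = A / 2 + Complex.normSq c := by
        rw [hr]; field_simp
      rw [this] at hk
      nlinarith
    rw [hc0]
    simp
    positivity
  · set t : ℂ := ((B⁻¹ : ℝ) : ℂ) * starRingEnd ℂ c with ht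
    have hk := key t
    have htc : (t * c).re = B⁻¹ * Complex.normSq c := by
      rw [ht, mul_assoc, Complex.conj_mul']
      simp [← Complex.ofReal_pow, ← Complex.ofReal_mul, Complex.normSq_eq_norm_sq]
      left
      rw [sq, ← div_div, div_self (ne_of_gt hBpos), one_div]
    have hnt : Complex.normSq t = B⁻¹ ^ 2 * Complex.normSq c := by
      rw [ht, Complex.normSq_mul, Complex.normSq_conj, Complex.normSq_ofReal]; ring
    rw [htc, hnt] at hk
    have hle : Complex.normSq c ≤ A * B := by
      have hB' : B ≠ 0 := ne_of_gt hBpos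
      have hinv : B⁻¹ * B = 1 := inv_mul_cancel₀ hB'
      have heq : B⁻¹ ^ 2 * Complex.normSq c * B = B⁻¹ * Complex.normSq c := by
        linear_combination (B⁻¹ * Complex.normSq c) * hinv
      rw [heq] at hk
      have h2 := mul_le_mul_of_nonneg_left
        (show B⁻¹ * Complex.normSq c ≤ A by linarith) hBpos.le
      rw [← mul_assoc, mul_inv_cancel₀ hB', one_mul] at h2
      linarith [h2]
    calc ‖c‖ = Real.sqrt (Complex.normSq c) := by rw [Complex.norm_def]
      _ ≤ Real.sqrt (A * B) := Real.sqrt_le_sqrt hle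
      _ = Real.sqrt A * Real.sqrt B := Real.sqrt_mul hA0 B

/-- **Norm bound for `λ_∅`-vectors**:
`‖λ_∅(x_1,…,x_n)ξ_ω‖² ≤ (∑_{p=0}^n p! C(n,p)²) ∏_i |||x_i|||² ≤ C n^{2n} ∏_i |||x_i|||²`
(with `C = e`), using `p! C(n,p)² ≤ n^{2p}/p!` and `∑_{p=0}^n n^{2p}/p! ≤ e·n^{2n}`
for `n ≥ 1`. -/
theorem lamEmpty_norm_bound [CStarRing N]
    (ω : N →ₗ[ℂ] ℂ)
    (hpos : ∀ a : N, 0 ≤ (ω (star a * a)).re ∧ (ω (star a * a)).im = 0)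
    (hstar : ∀ a : N, ω (star a) = starRingEnd ℂ (ω a))
    (n : ℕ) (hn : 1 ≤ n) (x : Fin n → N) :
    ‖lamEmptyIP ω x x‖
        ≤ (∑ p ∈ Finset.range (n + 1), (p.factorial * (n.choose p) ^ 2 : ℝ))
          * ∏ i, tripleNorm ω (x i) ^ 2 ∧
    (∀ p ≤ n, (p.factorial * (n.choose p) ^ 2 : ℝ) ≤ (n : ℝ) ^ (2 * p) / p.factorial) ∧
    (∑ p ∈ Finset.range (n + 1), (n : ℝ) ^ (2 * p) / p.factorial)
        ≤ Real.exp 1 * (n : ℝ) ^ (2 * n) ∧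
    ‖lamEmptyIP ω x x‖
        ≤ Real.exp 1 * (n : ℝ) ^ (2 * n) * ∏ i, tripleNorm ω (x i) ^ 2 := by
  classical
  set T : Fin n → ℝ := fun i => tripleNorm ω (x i) with hTdef
  have hT0 : ∀ i, 0 ≤ T i := fun i =>
    (norm_nonneg (x i)).trans ((le_max_left _ _).trans (le_max_left _ _))
  have hsqle : ∀ i, Real.sqrt (ω (star (x i) * x i)).re ≤ T i := fun i =>
    (le_max_right _ _).trans (le_max_left _ _)
  have habsle : ∀ i, ‖ω (x i)‖ ≤ T i := fun i =>
    (le_max_right _ _).trans (le_max_right _ _)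
  have hpair : ∀ i j, ‖ω (star (x i) * x j)‖ ≤ T i * T j := by
    intro i j
    refine (omega_cauchy_schwarz ω hpos hstar (x i) (x j)).trans ?_
    exact mul_le_mul (hsqle i) (hsqle j) (Real.sqrt_nonneg _) (hT0 i)
  have hstabs : ∀ i, ‖ω (star (x i))‖ ≤ T i := by
    intro i
    rw [hstar, Complex.norm_conj]
    exact habsle i
  set P : ℝ := ∏ i, T i ^ 2 with hPdef
  have hP0 : 0 ≤ P := Finset.prod_nonneg fun i _ => sq_nonneg _
  -- bound each term
  have bound_term : ∀ s t : Finset (Fin n),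
      ‖if s.card = t.card then
        (∑ e : {i // i ∈ s} ≃ {j // j ∈ t}, ∏ i : {i // i ∈ s}, ω (star (x i.1) * x (e i).1))
          * (∏ i ∈ sᶜ, ω (star (x i))) * (∏ j ∈ tᶜ, ω (x j))
      else 0‖
      ≤ if s.card = t.card then (s.card).factorial * P else 0 := by
    intro s t
    by_cases h : s.card = t.card
    · simp only [if_pos h]
      rw [norm_mul, norm_mul]
      have h1 : ‖∑ e : {i // i ∈ s} ≃ {j // j ∈ t},
            ∏ i : {i // i ∈ s}, ω (star (x i.1) * x (e i).1)‖
          ≤ (s.card).factorial * ((∏ i ∈ s, T i) * (∏ j ∈ t, T j)) := by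
        refine (norm_sum_le _ _).trans ?_
        have hone : ∀ e : {i // i ∈ s} ≃ {j // j ∈ t},
            ‖∏ i : {i // i ∈ s}, ω (star (x i.1) * x (e i).1)‖
              ≤ (∏ i ∈ s, T i) * (∏ j ∈ t, T j) := by
          intro e
          rw [norm_prod]
          calc ∏ i : {i // i ∈ s}, ‖ω (star (x i.1) * x (e i).1)‖
              ≤ ∏ i : {i // i ∈ s}, T i.1 * T (e i).1 := by
                refine Finset.prod_le_prod (fun _ _ => norm_nonneg _) ?_
                exact fun i _ => hpair i.1 (e i).1
            _ = (∏ i : {i // i ∈ s}, T i.1) * (∏ i : {i // i ∈ s}, T (e i).1) :=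
                Finset.prod_mul_distrib
            _ = (∏ i ∈ s, T i) * (∏ j ∈ t, T j) := by
                rw [Equiv.prod_comp e (fun j : {j // j ∈ t} => T j.1),
                  Finset.prod_coe_sort, Finset.prod_coe_sort]
        refine (Finset.sum_le_sum fun e _ => hone e).trans ?_
        rw [Finset.sum_const, nsmul_eq_mul]
        have hc : Fintype.card ({i // i ∈ s} ≃ {j // j ∈ t}) = (s.card).factorial := by
          have hcc : Fintype.card {i // i ∈ s} = Fintype.card {j // j ∈ t} := by
            rw [Fintype.card_coe, Fintype.card_coe, h]
          rw [Fintype.card_equiv (Fintype.equivOfCardEq hcc), Fintype.card_coe]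
        rw [Finset.card_univ, hc]
      have h2 : ‖∏ i ∈ sᶜ, ω (star (x i))‖ ≤ ∏ i ∈ sᶜ, T i := by
        rw [norm_prod]
        exact Finset.prod_le_prod (fun _ _ => norm_nonneg _) fun i _ => hstabs i
      have h3 : ‖∏ j ∈ tᶜ, ω (x j)‖ ≤ ∏ j ∈ tᶜ, T j := by
        rw [norm_prod]
        exact Finset.prod_le_prod (fun _ _ => norm_nonneg _) fun j _ => habsle j
      have hfin : (s.card).factorial * ((∏ i ∈ s, T i) * (∏ j ∈ t, T j))
          * (∏ i ∈ sᶜ, T i) * (∏ j ∈ tᶜ, T j) = (s.card).factorial * P := by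
        have hs : (∏ i ∈ s, T i) * (∏ i ∈ sᶜ, T i) = ∏ i, T i :=
          Finset.prod_mul_prod_compl s T
        have ht : (∏ j ∈ t, T j) * (∏ j ∈ tᶜ, T j) = ∏ j, T j :=
          Finset.prod_mul_prod_compl t T
        have hPP : (∏ i, T i) * (∏ i, T i) = P := by
          rw [hPdef, ← Finset.prod_mul_distrib]
          exact Finset.prod_congr rfl fun i _ => (sq (T i)).symm
        calc (s.card).factorial * ((∏ i ∈ s, T i) * (∏ j ∈ t, T j))
              * (∏ i ∈ sᶜ, T i) * (∏ j ∈ tᶜ, T j)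
            = (s.card).factorial * (((∏ i ∈ s, T i) * (∏ i ∈ sᶜ, T i))
              * ((∏ j ∈ t, T j) * (∏ j ∈ tᶜ, T j))) := by ring
          _ = (s.card).factorial * P := by rw [hs, ht, hPP]
      rw [← hfin]
      have hnn1 : (0:ℝ) ≤ (∏ i ∈ sᶜ, T i) := Finset.prod_nonneg fun i _ => hT0 i
      have hnn2 : (0:ℝ) ≤ (∏ j ∈ tᶜ, T j) := Finset.prod_nonneg fun j _ => hT0 j
      have hnn3 : (0:ℝ) ≤ (∏ i ∈ s, T i) := Finset.prod_nonneg fun i _ => hT0 i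
      have hnn4 : (0:ℝ) ≤ (∏ j ∈ t, T j) := Finset.prod_nonneg fun j _ => hT0 j
      have hnn5 : (0:ℝ) ≤ ((s.card).factorial : ℝ) * ((∏ i ∈ s, T i) * (∏ j ∈ t, T j)) :=
        mul_nonneg (Nat.cast_nonneg _) (mul_nonneg hnn3 hnn4)
      exact mul_le_mul (mul_le_mul h1 h2 (norm_nonneg _) hnn5) h3
        (norm_nonneg _) (mul_nonneg hnn5 hnn1)
    · simp [h]
  -- sum up the bounds
  have part1 : ‖lamEmptyIP ω x x‖
      ≤ (∑ p ∈ Finset.range (n + 1), (p.factorial * (n.choose p) ^ 2 : ℝ)) * P := by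
    rw [lamEmptyIP]
    refine (norm_sum_le _ _).trans ?_
    refine le_trans (Finset.sum_le_sum fun s _ =>
      (norm_sum_le _ _).trans (Finset.sum_le_sum fun t _ => bound_term s t))
      (le_of_eq ?_)
    -- inner sum over t
    have hinner : ∀ s : Finset (Fin n),
        (∑ t : Finset (Fin n), if s.card = t.card then ((s.card).factorial : ℝ) * P else 0)
          = (n.choose s.card : ℝ) * ((s.card).factorial * P) := by
      intro s
      rw [← Finset.sum_filter, Finset.sum_const, nsmul_eq_mul]
      congr 1
      have : (Finset.univ.filter fun t : Finset (Fin n) => s.card = t.card)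
          = Finset.univ.powersetCard s.card := by
        rw [Finset.powersetCard_eq_filter, Finset.powerset_univ]
        exact Finset.filter_congr fun t _ => by simp [eq_comm]
      rw [this, Finset.card_powersetCard, Finset.card_univ, Fintype.card_fin]
    calc (∑ s : Finset (Fin n), ∑ t : Finset (Fin n),
          if s.card = t.card then ((s.card).factorial : ℝ) * P else 0)
        = ∑ s : Finset (Fin n), (n.choose s.card : ℝ) * ((s.card).factorial * P) :=
          Finset.sum_congr rfl fun s _ => hinner s
      _ = ∑ s ∈ (Finset.univ : Finset (Fin n)).powerset,
            (n.choose s.card : ℝ) * ((s.card).factorial * P) := by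
          rw [Finset.powerset_univ]
      _ = ∑ p ∈ Finset.range (n + 1),
            n.choose p • ((n.choose p : ℝ) * ((p).factorial * P)) := by
          rw [Finset.sum_powerset_apply_card (fun m => (n.choose m : ℝ) * (m.factorial * P))]
          simp [Finset.card_univ]
      _ = (∑ p ∈ Finset.range (n + 1), (p.factorial * (n.choose p) ^ 2 : ℝ)) * P := by
          rw [Finset.sum_mul]
          refine Finset.sum_congr rfl fun p _ => ?_
          rw [nsmul_eq_mul]
          ring
  have part2 : ∀ p ≤ n, (p.factorial * (n.choose p) ^ 2 : ℝ) ≤ (n : ℝ) ^ (2 * p) / p.factorial := by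
    intro p _
    rw [le_div_iff₀ (by positivity : (0:ℝ) < (p.factorial : ℝ))]
    have h1 : (p.factorial * n.choose p : ℕ) ≤ n ^ p := by
      rw [← Nat.descFactorial_eq_factorial_mul_choose]
      exact Nat.descFactorial_le_pow n p
    have h1' : ((p.factorial : ℝ) * (n.choose p : ℝ)) ≤ (n : ℝ) ^ p := by
      exact_mod_cast h1
    have h2 : ((p.factorial : ℝ) * (n.choose p : ℝ)) ^ 2 ≤ ((n : ℝ) ^ p) ^ 2 := by
      refine pow_le_pow_left₀ (by positivity) h1' 2
    calc (p.factorial : ℝ) * (n.choose p : ℝ) ^ 2 * (p.factorial : ℝ)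
        = ((p.factorial : ℝ) * (n.choose p : ℝ)) ^ 2 := by ring
      _ ≤ ((n : ℝ) ^ p) ^ 2 := h2
      _ = (n : ℝ) ^ (2 * p) := by rw [← pow_mul, mul_comm]
  have part3 : (∑ p ∈ Finset.range (n + 1), (n : ℝ) ^ (2 * p) / p.factorial)
      ≤ Real.exp 1 * (n : ℝ) ^ (2 * n) := by
    have h1n : (1:ℝ) ≤ (n:ℝ) := by exact_mod_cast hn
    calc (∑ p ∈ Finset.range (n + 1), (n : ℝ) ^ (2 * p) / p.factorial)
        ≤ ∑ p ∈ Finset.range (n + 1), (n : ℝ) ^ (2 * n) * (1 / p.factorial) := by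
          refine Finset.sum_le_sum fun p hp => ?_
          rw [Finset.mem_range, Nat.lt_succ_iff] at hp
          rw [mul_one_div]
          exact (div_le_div_iff_of_pos_right (by positivity)).2 (pow_le_pow_right₀ h1n (by omega))
      _ = (n : ℝ) ^ (2 * n) * ∑ p ∈ Finset.range (n + 1), (1 / p.factorial : ℝ) := by
          rw [Finset.mul_sum]
      _ ≤ (n : ℝ) ^ (2 * n) * Real.exp 1 := by
          refine mul_le_mul_of_nonneg_left ?_ (by positivity)
          simpa using Real.sum_le_exp_of_nonneg zero_le_one (n + 1)
      _ = Real.exp 1 * (n : ℝ) ^ (2 * n) := mul_comm _ _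
  refine ⟨part1, part2, part3, ?_⟩
  have hS : (∑ p ∈ Finset.range (n + 1), (p.factorial * (n.choose p) ^ 2 : ℝ))
      ≤ ∑ p ∈ Finset.range (n + 1), (n : ℝ) ^ (2 * p) / p.factorial :=
    Finset.sum_le_sum fun p hp =>
      part2 p (by rw [Finset.mem_range, Nat.lt_succ_iff] at hp; exact hp)
  calc ‖lamEmptyIP ω x x‖
      ≤ (∑ p ∈ Finset.range (n + 1), (p.factorial * (n.choose p) ^ 2 : ℝ)) * P := part1
    _ ≤ (∑ p ∈ Finset.range (n + 1), (n : ℝ) ^ (2 * p) / p.factorial) * P :=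
        mul_le_mul_of_nonneg_right hS hP0
    _ ≤ Real.exp 1 * (n : ℝ) ^ (2 * n) * P :=
        mul_le_mul_of_nonneg_right part3 hP0
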